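/- Let F be a free group, R a normal subgroup of F, and G = F/R. Then the natural sequence 0 → H₂(G,ℤ) → R/[F,R] → Fᵃᵇ → Gᵃᵇ → 0 is exact; concretely: the map Fᵃᵇ → Gᵃᵇ induced by the projection F → G is surjective, its kernel equals the image of the map R/[F,R] → Fᵃᵇ induced by the inclusion R ↪ F, and the kernel of R/[F,R] → Fᵃᵇ is isomorphic to the second group homology H₂(G,ℤ) of G with trivial coefficients ℤ. -/

import Mathlib

/-- Second boundary map `ℤ[G²] → ℤ[G]` of the bar complex computing the homology of `G`
with trivial coefficients `ℤ`: `d₂(g,h) = [h] - [gh] + [g]`. -/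
noncomputable def barD2 (G : Type*) [Group G] : ((G × G) →₀ ℤ) →ₗ[ℤ] (G →₀ ℤ) :=
  Finsupp.lift (G →₀ ℤ) ℤ (G × G) fun p =>
    Finsupp.single p.2 1 - Finsupp.single (p.1 * p.2) 1 + Finsupp.single p.1 1

/-- Third boundary map `ℤ[G³] → ℤ[G²]` of the bar complex:
`d₃(g,h,k) = (h,k) - (gh,k) + (g,hk) - (g,h)`. -/
noncomputable def barD3 (G : Type*) [Group G] : ((G × G × G) →₀ ℤ) →ₗ[ℤ] ((G × G) →₀ ℤ) :=
  Finsupp.lift ((G × G) →₀ ℤ) ℤ (G × G × G) fun t =>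
    Finsupp.single (t.2.1, t.2.2) 1 - Finsupp.single (t.1 * t.2.1, t.2.2) 1 +
      Finsupp.single (t.1, t.2.1 * t.2.2) 1 - Finsupp.single (t.1, t.2.1) 1

/-- The second group homology `H₂(G, ℤ)` of `G` with trivial coefficients `ℤ`,
defined as `ker d₂ / im d₃` in the bar complex (since `im d₃ ⊆ ker d₂`, this is the
quotient of `ker d₂` by the pullback of `range d₃`). -/
noncomputable abbrev H2 (G : Type*) [Group G] :=
  LinearMap.ker (barD2 G) ⧸
    (LinearMap.range (barD3 G)).comap (LinearMap.ker (barD2 G)).subtype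


open Finsupp Subgroup
open scoped commutatorElement

namespace Hopf

variable {F : Type*} [Group F] (R : Subgroup F) [R.Normal]

open Classical in
/-- a set-theoretic section of `F → F ⧸ R` sending `1` to `1`. -/
noncomputable def s (g : F ⧸ R) : F := if g = 1 then 1 else g.out

lemma s_spec (g : F ⧸ R) : QuotientGroup.mk (s R g) = g := by
  unfold s; split
  · simp [*]
  · exact QuotientGroup.out_eq' g

lemma s_one : s R 1 = 1 := by simp [s]

lemma c_mem (g h : F ⧸ R) : s R g * s R h * (s R (g * h))⁻¹ ∈ R := by
  rw [← QuotientGroup.eq_one_iff]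
  simp only [QuotientGroup.mk_mul, QuotientGroup.mk_inv, s_spec]
  group

/-- the 2-cocycle `c g h = s g * s h * s (g h)⁻¹` with values in `R`. -/
noncomputable def c (g h : F ⧸ R) : R := ⟨_, c_mem R g h⟩

lemma lam_mem (f : F) : f * (s R (QuotientGroup.mk f))⁻¹ ∈ R := by
  rw [← QuotientGroup.eq_one_iff]
  simp [s_spec]

/-- `lam f = f * s(π f)⁻¹ ∈ R`. -/
noncomputable def lam (f : F) : R := ⟨_, lam_mem R f⟩

instance : CommGroup (↥R ⧸ ⁅(⊤ : Subgroup F), R⁆.subgroupOf R) :=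
  { (inferInstance : Group _) with
    mul_comm := by
      intro a b
      induction a using QuotientGroup.induction_on with | _ r => ?_
      induction b using QuotientGroup.induction_on with | _ r' => ?_
      rw [← QuotientGroup.mk_mul, ← QuotientGroup.mk_mul, QuotientGroup.eq]
      rw [Subgroup.mem_subgroupOf]
      have : (((r * r')⁻¹ * (r' * r) : ↥R) : F) = ⁅((r' : F))⁻¹, ((r : F))⁻¹⁆ := by
        push_cast; group
      rw [this]
      exact Subgroup.commutator_mem_commutator trivial (R.inv_mem r.2) }

lemma q_conj (f : F) (r : ↥R) (h : f * r * f⁻¹ ∈ R) :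
    (QuotientGroup.mk ⟨f * r * f⁻¹, h⟩ : ↥R ⧸ ⁅(⊤ : Subgroup F), R⁆.subgroupOf R) =
      QuotientGroup.mk r := by
  rw [QuotientGroup.eq, Subgroup.mem_subgroupOf]
  have : ((⟨f * ↑r * f⁻¹, h⟩⁻¹ * r : ↥R) : F) = ⁅f, ((r : F))⁻¹⁆ := by
    push_cast; group
  rw [this]
  exact Subgroup.commutator_mem_commutator trivial (R.inv_mem r.2)



set_option linter.unusedSectionVars false

abbrev Q (R : Subgroup F) [R.Normal] := ↥R ⧸ ⁅(⊤ : Subgroup F), R⁆.subgroupOf R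

lemma qmk_lam_mul (x y : F) :
    (QuotientGroup.mk (lam R (x * y)) : Q R) =
      QuotientGroup.mk (lam R x) * QuotientGroup.mk (lam R y) *
        QuotientGroup.mk (c R (QuotientGroup.mk x) (QuotientGroup.mk y)) := by
  have hmem : s R (QuotientGroup.mk x) * (lam R y : F) * (s R (QuotientGroup.mk x))⁻¹ ∈ R :=
    (‹R.Normal›).conj_mem _ (lam R y).2 _
  have key : lam R (x * y) = lam R x * ⟨_, hmem⟩ *
      c R (QuotientGroup.mk x) (QuotientGroup.mk y) := by
    apply Subtype.ext
    show x * y * (s R (QuotientGroup.mk (x * y)))⁻¹ = _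
    push_cast [lam, c]
    rw [QuotientGroup.mk_mul]
    group
  rw [key, QuotientGroup.mk_mul, QuotientGroup.mk_mul, q_conj]

/-- `l f` is the class of `lam f` in `R/[F,R]`, written additively. -/
noncomputable def l (f : F) : Additive (Q R) := Additive.ofMul (QuotientGroup.mk (lam R f))

/-- `cc g h` is the class of the cocycle `c g h` in `R/[F,R]`, written additively. -/
noncomputable def cc (g h : F ⧸ R) : Additive (Q R) := Additive.ofMul (QuotientGroup.mk (c R g h))

lemma l_mul (x y : F) :
    l R (x * y) = l R x + l R y + cc R (QuotientGroup.mk x) (QuotientGroup.mk y) :=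
  congrArg Additive.ofMul (qmk_lam_mul R x y)

lemma l_one : l R 1 = 0 := by
  have : lam R 1 = 1 := by
    apply Subtype.ext
    show 1 * (s R (QuotientGroup.mk 1))⁻¹ = 1
    rw [QuotientGroup.mk_one, s_one]; group
  simp [l, this]

lemma cc_one_one : cc R 1 1 = 0 := by
  have : c R 1 1 = 1 := by
    apply Subtype.ext
    show s R 1 * s R 1 * (s R (1 * 1))⁻¹ = 1
    rw [mul_one, s_one]; group
  simp [cc, this]

lemma l_inv (x : F) :
    l R x⁻¹ = - l R x - cc R (QuotientGroup.mk x) (QuotientGroup.mk x)⁻¹ := by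
  have h := l_mul R x x⁻¹
  rw [mul_inv_cancel, l_one R, QuotientGroup.mk_inv] at h
  rw [← sub_eq_zero, ← h.symm]; abel

lemma l_mem (r : F) (h : r ∈ R) : l R r = Additive.ofMul (QuotientGroup.mk ⟨r, h⟩ : Q R) := by
  have h1 : (QuotientGroup.mk r : F ⧸ R) = 1 := (QuotientGroup.eq_one_iff r).2 h
  have : lam R r = ⟨r, h⟩ := by
    apply Subtype.ext
    show r * (s R (QuotientGroup.mk r))⁻¹ = r
    rw [h1, s_one]; group
  rw [l, this]


section Bar

-- evaluation lemmas for the bar differentials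
lemma barD2_single (G : Type*) [Group G] (p : G × G) :
    barD2 G (single p 1) =
      single p.2 1 - single (p.1 * p.2) 1 + single p.1 1 := by
  simp [barD2, Finsupp.lift_apply, Finsupp.sum_single_index]

lemma barD3_single (G : Type*) [Group G] (t : G × G × G) :
    barD3 G (single t 1) =
      single (t.2.1, t.2.2) 1 - single (t.1 * t.2.1, t.2.2) 1 +
        single (t.1, t.2.1 * t.2.2) 1 - single (t.1, t.2.1) 1 := by
  simp [barD3, Finsupp.lift_apply, Finsupp.sum_single_index]

end Bar

/-- The map `ℤ[G²] → R/[F,R]` sending `[g|h]` to the class of `c g h`. -/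
noncomputable def phi0 : ((F ⧸ R) × (F ⧸ R) →₀ ℤ) →ₗ[ℤ] Additive (Q R) :=
  Finsupp.lift (Additive (Q R)) ℤ ((F ⧸ R) × (F ⧸ R)) fun p => cc R p.1 p.2

lemma phi0_single (p : (F ⧸ R) × (F ⧸ R)) : phi0 R (single p 1) = cc R p.1 p.2 := by
  simp [phi0, Finsupp.lift_apply, Finsupp.sum_single_index]

lemma qmk_c_cocycle (g h k : F ⧸ R) :
    (QuotientGroup.mk (c R g h) * QuotientGroup.mk (c R (g * h) k) : Q R) =
      QuotientGroup.mk (c R h k) * QuotientGroup.mk (c R g (h * k)) := by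
  have hmem : s R g * (c R h k : F) * (s R g)⁻¹ ∈ R :=
    (‹R.Normal›).conj_mem _ (c R h k).2 _
  have key : c R g h * c R (g * h) k = (⟨_, hmem⟩ : ↥R) * c R g (h * k) := by
    apply Subtype.ext
    push_cast [c]
    rw [mul_assoc g h k]
    group
  rw [← QuotientGroup.mk_mul, key, QuotientGroup.mk_mul, q_conj]

lemma cc_cocycle (g h k : F ⧸ R) :
    cc R g h + cc R (g * h) k = cc R h k + cc R g (h * k) :=
  congrArg Additive.ofMul (qmk_c_cocycle R g h k)

lemma phi0_d3 : (phi0 R).comp (barD3 (F ⧸ R)) = 0 := by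
  apply Finsupp.lhom_ext'
  intro t
  apply LinearMap.ext_ring
  simp only [LinearMap.comp_apply, Finsupp.lsingle_apply, LinearMap.zero_apply,
    barD3_single, map_add, map_sub, phi0_single]
  have this2 : cc R t.2.1 t.2.2 + cc R t.1 (t.2.1 * t.2.2) -
      (cc R t.1 t.2.1 + cc R (t.1 * t.2.1) t.2.2) = 0 := by
    rw [sub_eq_zero]; exact (cc_cocycle R t.1 t.2.1 t.2.2).symm
  rw [← this2]; abel

/-- `M = ℤ[G²]/im d₃`. -/
noncomputable abbrev M := ((F ⧸ R) × (F ⧸ R) →₀ ℤ) ⧸ LinearMap.range (barD3 (F ⧸ R))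

/-- class of `[g|h]` in `M`. -/
noncomputable def mm (g h : F ⧸ R) : M R :=
  Submodule.Quotient.mk (single (g, h) 1)

/-- class of `[1|1]`. -/
noncomputable def uu : M R := mm R 1 1

lemma mm_rel1 (g : F ⧸ R) : mm R g 1 = uu R := by
  rw [mm, uu, mm, Submodule.Quotient.eq]
  exact ⟨-(single (g, 1, 1) 1), by rw [map_neg, barD3_single]; simp⟩

lemma mm_rel2 (g : F ⧸ R) : mm R 1 g = uu R := by
  rw [mm, uu, mm, Submodule.Quotient.eq]
  exact ⟨single (1, 1, g) 1, by rw [barD3_single]; simp⟩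

lemma mm_rel3 (g h k : F ⧸ R) :
    mm R h k - mm R (g * h) k + mm R g (h * k) - mm R g h = 0 := by
  simp only [mm, ← Submodule.Quotient.mk_sub, ← Submodule.Quotient.mk_add,
    Submodule.Quotient.mk_eq_zero]
  exact ⟨single (g, h, k) 1, by rw [barD3_single]⟩

lemma mm_rel4 (g : F ⧸ R) : mm R g g⁻¹ = mm R g⁻¹ g := by
  have := mm_rel3 R g⁻¹ g g⁻¹
  simp only [inv_mul_cancel, mul_inv_cancel, mm_rel1, mm_rel2] at this
  rw [← sub_eq_zero, ← this]; abel


/-- The central extension `E = G × M` defined by the tautological 2-cocycle `mm`. -/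
abbrev E := (F ⧸ R) × M R

noncomputable instance : Group (E R) where
  mul a b := (a.1 * b.1, a.2 + b.2 + mm R a.1 b.1)
  one := (1, - uu R)
  inv a := (a.1⁻¹, - a.2 - mm R a.1 a.1⁻¹ - uu R)
  mul_assoc a b c := by
    refine Prod.ext (mul_assoc _ _ _) ?_
    show a.2 + b.2 + mm R a.1 b.1 + c.2 + mm R (a.1 * b.1) c.1 =
      a.2 + (b.2 + c.2 + mm R b.1 c.1) + mm R a.1 (b.1 * c.1)
    have h' := neg_eq_zero.mpr (mm_rel3 R a.1 b.1 c.1)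
    rw [← sub_eq_zero, ← h']; abel
  one_mul a := by
    refine Prod.ext (one_mul _) ?_
    show - uu R + a.2 + mm R 1 a.1 = a.2
    rw [mm_rel2]; abel
  mul_one a := by
    refine Prod.ext (mul_one _) ?_
    show a.2 + - uu R + mm R a.1 1 = a.2
    rw [mm_rel1]; abel
  inv_mul_cancel a := by
    refine Prod.ext (inv_mul_cancel _) ?_
    show - a.2 - mm R a.1 a.1⁻¹ - uu R + a.2 + mm R a.1⁻¹ a.1 = - uu R
    rw [← mm_rel4]; abel

lemma E_mul_fst (x y : E R) : (x * y).1 = x.1 * y.1 := rfl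
lemma E_mul_snd (x y : E R) : (x * y).2 = x.2 + y.2 + mm R x.1 y.1 := rfl
lemma E_one_fst : ((1 : E R)).1 = 1 := rfl
lemma E_one_snd : ((1 : E R)).2 = - uu R := rfl

lemma E_central (m : M R) (e : E R) : e * (1, m) = ((1, m) : E R) * e := by
  refine Prod.ext ?_ ?_
  · show e.1 * 1 = 1 * e.1; rw [one_mul, mul_one]
  · show e.2 + m + mm R e.1 1 = m + e.2 + mm R 1 e.1
    rw [mm_rel1, mm_rel2]; abel

/-- first projection of `E`. -/
def pE : E R →* (F ⧸ R) where
  toFun := Prod.fst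
  map_one' := rfl
  map_mul' _ _ := rfl

variable [IsFreeGroup F]

/-- Lift of the projection `F → G` to the central extension `E`, using freeness of `F`. -/
noncomputable def Psi : F →* E R :=
  IsFreeGroup.lift fun x => ((QuotientGroup.mk (IsFreeGroup.of x) : F ⧸ R), 0)

lemma Psi_fst (f : F) : (Psi R f).1 = QuotientGroup.mk f := by
  have : (pE R).comp (Psi R) = QuotientGroup.mk' R :=
    IsFreeGroup.ext_hom fun x => by
      simp [Psi, pE, IsFreeGroup.lift_of]
  exact DFunLike.congr_fun this f

/-- `T f` is the `M`-component of `Psi f`. -/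
noncomputable def T (f : F) : M R := (Psi R f).2

lemma T_mul (a b : F) :
    T R (a * b) = T R a + T R b + mm R (QuotientGroup.mk a) (QuotientGroup.mk b) := by
  show (Psi R (a * b)).2 = _
  rw [map_mul, E_mul_snd, Psi_fst, Psi_fst]; rfl

lemma T_one : T R 1 = - uu R := by
  show (Psi R 1).2 = _
  rw [map_one, E_one_snd]

lemma T_inv (a : F) :
    T R a⁻¹ = - uu R - T R a - mm R (QuotientGroup.mk a) (QuotientGroup.mk a)⁻¹ := by
  have h := T_mul R a a⁻¹
  rw [mul_inv_cancel, T_one, QuotientGroup.mk_inv] at h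
  rw [← sub_eq_zero, ← h.symm]; abel

/-- The homomorphism `R → M`, `r ↦ T r + u`. -/
noncomputable def theta : ↥R →* Multiplicative (M R) where
  toFun r := Multiplicative.ofAdd (T R (r : F) + uu R)
  map_one' := by
    simp [T_one]
  map_mul' r r' := by
    have h1 : (QuotientGroup.mk ((r : F)) : F ⧸ R) = 1 := (QuotientGroup.eq_one_iff _).2 r.2
    have h2 : (QuotientGroup.mk ((r' : F)) : F ⧸ R) = 1 := (QuotientGroup.eq_one_iff _).2 r'.2
    have key : T R ((r * r' : ↥R) : F) = T R (r : F) + T R (r' : F) + uu R := by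
      show T R ((r : F) * (r' : F)) = _
      rw [T_mul, h1, h2]; rfl
    show Multiplicative.ofAdd _ = Multiplicative.ofAdd _ * Multiplicative.ofAdd _
    rw [← ofAdd_add]
    congr 1
    rw [key]; abel

lemma theta_commutator (f : F) (r : F) (hr : r ∈ R)
    (hmem : ⁅f, r⁆ ∈ R) : theta R ⟨⁅f, r⁆, hmem⟩ = 1 := by
  have hPsir : Psi R r = ((1 : F ⧸ R), T R r) := by
    refine Prod.ext ?_ rfl
    rw [Psi_fst]; exact (QuotientGroup.eq_one_iff _).2 hr
  have hcomm : Psi R ⁅f, r⁆ = 1 := by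
    rw [map_commutatorElement, hPsir]
    exact commutatorElement_eq_one_iff_commute.2 (E_central R (T R r) (Psi R f))
  have hT : T R ⁅f, r⁆ = - uu R := by
    show (Psi R ⁅f, r⁆).2 = _
    rw [hcomm, E_one_snd]
  show Multiplicative.ofAdd (T R ⁅f, r⁆ + uu R) = 1
  rw [hT]
  simp

lemma theta_ker (x : ↥R) (hx : (x : F) ∈ ⁅(⊤ : Subgroup F), R⁆) : theta R x = 1 := by
  have hle : ⁅(⊤ : Subgroup F), R⁆ ≤ (theta R).ker.map R.subtype := by
    rw [Subgroup.commutator_le]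
    intro f _ r hr
    have hmem : ⁅f, r⁆ ∈ R := by
      rw [commutatorElement_def]
      exact mul_mem ((‹R.Normal›).conj_mem r hr f) (R.inv_mem hr)
    exact ⟨⟨⁅f, r⁆, hmem⟩, theta_commutator R f r hr hmem, rfl⟩
  obtain ⟨y, hy, hyx⟩ := hle hx
  have : y = x := Subtype.ext hyx
  rwa [← this]

/-- The homomorphism `χ : R/[F,R] → M`. -/
noncomputable def chi : Q R →* Multiplicative (M R) :=
  QuotientGroup.lift _ (theta R) fun x hx => theta_ker R x ((Subgroup.mem_subgroupOf).1 hx)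

lemma chi_mk (r : ↥R) :
    chi R (QuotientGroup.mk r) = Multiplicative.ofAdd (T R (r : F) + uu R) := rfl

lemma chi_c (g h : F ⧸ R) :
    chi R (QuotientGroup.mk (c R g h)) =
      Multiplicative.ofAdd (mm R g h + T R (s R g) + T R (s R h) - T R (s R (g * h))) := by
  rw [chi_mk]
  congr 1
  have hc : ((c R g h : F)) = s R g * s R h * (s R (g * h))⁻¹ := rfl
  rw [hc, T_mul, T_mul, T_inv]
  simp only [QuotientGroup.mk_mul, QuotientGroup.mk_inv, s_spec]
  abel


/-- `χ` as a `ℤ`-linear map `Additive (R/[F,R]) → M`. -/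
noncomputable def chiL : Additive (Q R) →ₗ[ℤ] M R :=
  (MonoidHom.toAdditiveLeft (chi R)).toIntLinearMap

lemma chiL_ofMul_c (g h : F ⧸ R) :
    chiL R (Additive.ofMul (QuotientGroup.mk (c R g h) : Q R)) =
      mm R g h + T R (s R g) + T R (s R h) - T R (s R (g * h)) := by
  show Multiplicative.toAdd (chi R (QuotientGroup.mk (c R g h))) = _
  rw [chi_c]
  rfl

/-- lift of `g ↦ T (s g)` to `ℤ[G]`. -/
noncomputable def betaT : ((F ⧸ R) →₀ ℤ) →ₗ[ℤ] M R :=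
  Finsupp.lift (M R) ℤ (F ⧸ R) fun g => T R (s R g)

lemma betaT_single (g : F ⧸ R) : betaT R (single g 1) = T R (s R g) := by
  simp [betaT, Finsupp.lift_apply, Finsupp.sum_single_index]

/-- **Main identity**: `χ ∘ φ₀ = mkQ + β̃ ∘ d₂`. -/
lemma main_identity :
    (chiL R) ∘ₗ (phi0 R) =
      (LinearMap.range (barD3 (F ⧸ R))).mkQ + (betaT R) ∘ₗ (barD2 (F ⧸ R)) := by
  apply Finsupp.lhom_ext'
  intro p
  apply LinearMap.ext_ring
  simp only [LinearMap.comp_apply, Finsupp.lsingle_apply, LinearMap.add_apply]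
  rw [phi0_single, barD2_single]
  show chiL R (Additive.ofMul (QuotientGroup.mk (c R p.1 p.2))) = _
  rw [chiL_ofMul_c]
  rw [map_add, map_sub, betaT_single, betaT_single, betaT_single]
  show _ = mm R p.1 p.2 + _
  abel

lemma inj_key (z : (F ⧸ R) × (F ⧸ R) →₀ ℤ) (h2 : barD2 (F ⧸ R) z = 0)
    (h0 : phi0 R z = 0) : z ∈ LinearMap.range (barD3 (F ⧸ R)) := by
  have := DFunLike.congr_fun (main_identity R) z
  simp only [LinearMap.comp_apply, LinearMap.add_apply, h2, h0, map_zero, add_zero] at this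
  rw [← Submodule.Quotient.mk_eq_zero]
  exact this.symm


/-- For every element of `[F,F]` there is a 2-chain `z` with
`d₂ z = [1] - [π x]` and `φ₀ z = l x`. -/
lemma exists_cycle (x : F) (hx : x ∈ _root_.commutator F) :
    ∃ z : (F ⧸ R) × (F ⧸ R) →₀ ℤ,
      barD2 (F ⧸ R) z = single 1 1 - single (QuotientGroup.mk x) 1 ∧
        phi0 R z = l R x := by
  rw [commutator_eq_closure] at hx
  induction hx using Subgroup.closure_induction with
  | mem w hw =>
    obtain ⟨a, b, rfl⟩ := hw
    set A : F ⧸ R := QuotientGroup.mk a with hA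
    set B : F ⧸ R := QuotientGroup.mk b with hB
    refine ⟨single (A, B) 1 + single (A * B, A⁻¹) 1 + single (A * B * A⁻¹, B⁻¹) 1
      - single (A, A⁻¹) 1 - single (B, B⁻¹) 1 - single ((1 : F ⧸ R), (1 : F ⧸ R)) 1, ?_, ?_⟩
    · have hmk : (QuotientGroup.mk ⁅a, b⁆ : F ⧸ R) = A * B * A⁻¹ * B⁻¹ := by
        rw [commutatorElement_def]
        simp [QuotientGroup.mk_mul, QuotientGroup.mk_inv]
        rfl
      simp only [map_add, map_sub, barD2_single, hmk, mul_inv_cancel, mul_one, one_mul]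
      abel
    · have e4 := l_inv R a
      have e5 := l_inv R b
      simp only [map_add, map_sub, phi0_single, cc_one_one]
      rw [commutatorElement_def, l_mul, l_mul, l_mul, e4, e5]
      simp only [QuotientGroup.mk_mul, QuotientGroup.mk_inv, ← hA, ← hB]
      abel
  | one =>
    refine ⟨0, ?_, ?_⟩
    · rw [map_zero, QuotientGroup.mk_one, sub_self]
    · rw [map_zero, l_one]
  | mul x y hx hy ihx ihy =>
    obtain ⟨zx, hx2, hx0⟩ := ihx
    obtain ⟨zy, hy2, hy0⟩ := ihy
    refine ⟨zx + zy + single (QuotientGroup.mk x, QuotientGroup.mk y) 1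
      - single ((1 : F ⧸ R), (1 : F ⧸ R)) 1, ?_, ?_⟩
    · simp only [map_add, map_sub, barD2_single, hx2, hy2, QuotientGroup.mk_mul,
        mul_one, one_mul]
      abel
    · simp only [map_add, map_sub, phi0_single, hx0, hy0, cc_one_one, l_mul]
      abel
  | inv x hx ihx =>
    obtain ⟨zx, hx2, hx0⟩ := ihx
    refine ⟨single ((1 : F ⧸ R), (1 : F ⧸ R)) 1
      - single ((QuotientGroup.mk x : F ⧸ R), (QuotientGroup.mk x : F ⧸ R)⁻¹) 1 - zx, ?_, ?_⟩
    · simp only [map_sub, barD2_single, hx2, QuotientGroup.mk_inv, mul_inv_cancel,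
        mul_one, one_mul]
      abel
    · simp only [map_sub, phi0_single, hx0, cc_one_one, l_inv, QuotientGroup.mk_inv]
      abel

end Hopf

lemma ofMul_helper {A : Type*} [CommGroup A] (a b c : A) :
    Additive.ofMul (a * b * c⁻¹) =
      Additive.ofMul b - Additive.ofMul c + Additive.ofMul a := by
  rw [show a * b * c⁻¹ = b * c⁻¹ * a by rw [mul_assoc]; exact mul_comm _ _,
    sub_eq_add_neg]
  rfl

open Hopf Finsupp

/-- **Hopf's exact sequence.** Let `F` be a free group, `R` a normal subgroup of `F`,
`G = F/R`, and let `ψ : R/[F,R] → Fᵃᵇ` be the map induced by the inclusion `R ↪ F`.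
Then the sequence `0 → H₂(G,ℤ) → R/[F,R] → Fᵃᵇ → Gᵃᵇ → 0` is exact: the induced map
`Fᵃᵇ → Gᵃᵇ` is surjective with kernel equal to the range of `ψ`, and the kernel
of `ψ` is isomorphic to `H₂(G, ℤ)`. -/
theorem hopf_exact_sequence {F : Type*} [Group F] [IsFreeGroup F] (R : Subgroup F)
    [R.Normal]
    (ψ : (↥R ⧸ (⁅(⊤ : Subgroup F), R⁆.subgroupOf R)) →* Abelianization F)
    (hψ : ∀ r : ↥R, ψ (QuotientGroup.mk r) = Abelianization.of (r : F)) :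
    Function.Surjective (Abelianization.map (QuotientGroup.mk' R)) ∧
    (Abelianization.map (QuotientGroup.mk' R)).ker = ψ.range ∧
    Nonempty (Additive ↥ψ.ker ≃+ H2 (F ⧸ R)) := by
  classical
  refine ⟨?_, ?_, ?_⟩
  · -- surjectivity of `Fᵃᵇ → Gᵃᵇ`
    intro y
    obtain ⟨g, rfl⟩ := QuotientGroup.mk_surjective y
    obtain ⟨f, rfl⟩ := QuotientGroup.mk_surjective g
    exact ⟨Abelianization.of f, Abelianization.map_of _ _⟩
  · -- kernel = range ψ
    ext x
    constructor
    · intro hx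
      obtain ⟨g, rfl⟩ := QuotientGroup.mk_surjective x
      have h1 : Abelianization.of (QuotientGroup.mk' R g) = 1 := by
        rw [← Abelianization.map_of]; exact hx
      have h2 : (QuotientGroup.mk' R g) ∈ _root_.commutator (F ⧸ R) :=
        (QuotientGroup.eq_one_iff _).1 h1
      have h3 : Subgroup.map (QuotientGroup.mk' R) (_root_.commutator F) =
          _root_.commutator (F ⧸ R) := by
        rw [_root_.commutator_def, _root_.commutator_def, Subgroup.map_commutator,
          Subgroup.map_top_of_surjective _ (QuotientGroup.mk'_surjective R)]
      rw [← h3] at h2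
      obtain ⟨cg, hc, hcg⟩ := h2
      have hmem : cg⁻¹ * g ∈ R := (QuotientGroup.eq).1 hcg
      refine ⟨QuotientGroup.mk ⟨cg⁻¹ * g, hmem⟩, ?_⟩
      rw [hψ]
      show Abelianization.of (cg⁻¹ * g) = QuotientGroup.mk g
      have hofc : Abelianization.of cg = 1 := (QuotientGroup.eq_one_iff _).2 hc
      rw [map_mul, map_inv, hofc, inv_one, one_mul]
      rfl
    · rintro ⟨w, rfl⟩
      obtain ⟨r, rfl⟩ := QuotientGroup.mk_surjective w
      rw [MonoidHom.mem_ker, hψ]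
      show Abelianization.map (QuotientGroup.mk' R) (Abelianization.of (r : F)) = 1
      rw [Abelianization.map_of]
      have h1 : QuotientGroup.mk' R (r : F) = 1 := (QuotientGroup.eq_one_iff _).2 r.2
      rw [h1, map_one]
  · -- the isomorphism with H₂
    let ψL : Additive (Q R) →ₗ[ℤ] Additive (Abelianization F) :=
      (MonoidHom.toAdditive ψ).toIntLinearMap
    let Lab : ((F ⧸ R) →₀ ℤ) →ₗ[ℤ] Additive (Abelianization F) :=
      Finsupp.lift _ ℤ _ fun g => Additive.ofMul (Abelianization.of (s R g))
    have Lab_single : ∀ g : F ⧸ R,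
        Lab (single g 1) = Additive.ofMul (Abelianization.of (s R g)) := by
      intro g; simp [Lab, Finsupp.lift_apply, Finsupp.sum_single_index]
    have identity2 : ψL ∘ₗ phi0 R = Lab ∘ₗ barD2 (F ⧸ R) := by
      apply Finsupp.lhom_ext'
      intro p
      apply LinearMap.ext_ring
      simp only [LinearMap.comp_apply, Finsupp.lsingle_apply]
      rw [phi0_single, barD2_single]
      show Additive.ofMul (ψ (QuotientGroup.mk (c R p.1 p.2))) = _
      rw [hψ]
      have hval : ((c R p.1 p.2 : F)) = s R p.1 * s R p.2 * (s R (p.1 * p.2))⁻¹ := rfl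
      rw [hval, map_mul Abelianization.of (s R p.1 * s R p.2) ((s R (p.1 * p.2))⁻¹),
        map_mul Abelianization.of (s R p.1) (s R p.2),
        map_inv Abelianization.of (s R (p.1 * p.2)),
        map_add, map_sub, Lab_single, Lab_single, Lab_single, ofMul_helper]
    have hker : ∀ z : ((F ⧸ R) × (F ⧸ R) →₀ ℤ), barD2 (F ⧸ R) z = 0 →
        ψ (Additive.toMul (phi0 R z)) = 1 := by
      intro z hz
      have h := DFunLike.congr_fun identity2 z
      simp only [LinearMap.comp_apply, hz, map_zero] at h
      have h2 : Additive.toMul (ψL (phi0 R z)) = ψ (Additive.toMul (phi0 R z)) := rfl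
      rw [h] at h2
      exact h2.symm
    let toK : ↥(LinearMap.ker (barD2 (F ⧸ R))) →+ Additive ↥ψ.ker :=
      { toFun := fun z =>
          Additive.ofMul (⟨Additive.toMul (phi0 R (z : _)),
            hker _ (LinearMap.mem_ker.1 z.2)⟩ : ↥ψ.ker)
        map_zero' := by
          apply congrArg Additive.ofMul
          apply Subtype.ext
          show Additive.toMul (phi0 R ((0 : _) : (F ⧸ R) × (F ⧸ R) →₀ ℤ)) = 1
          simp only [ZeroMemClass.coe_zero, map_zero]
          rfl
        map_add' := by
          intro z z'
          apply congrArg Additive.ofMul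
          apply Subtype.ext
          show Additive.toMul (phi0 R _) =
            Additive.toMul (phi0 R _) * Additive.toMul (phi0 R _)
          rw [Submodule.coe_add, map_add]
          rfl }
    have hW : (LinearMap.range (barD3 (F ⧸ R))).comap
        (LinearMap.ker (barD2 (F ⧸ R))).subtype ≤ LinearMap.ker toK.toIntLinearMap := by
      intro z hz
      obtain ⟨w, hw⟩ := hz
      rw [LinearMap.mem_ker]
      have h0 : phi0 R (z : (F ⧸ R) × (F ⧸ R) →₀ ℤ) = 0 := by
        have h := DFunLike.congr_fun (phi0_d3 R) w
        rw [LinearMap.comp_apply] at h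
        rw [show ((z : _) : (F ⧸ R) × (F ⧸ R) →₀ ℤ) = barD3 (F ⧸ R) w from hw.symm]
        exact h
      apply congrArg Additive.ofMul
      apply Subtype.ext
      show Additive.toMul (phi0 R (z : _)) = 1
      rw [h0]
      rfl
    let Phi := ((LinearMap.range (barD3 (F ⧸ R))).comap
        (LinearMap.ker (barD2 (F ⧸ R))).subtype).liftQ toK.toIntLinearMap hW
    have hinj : Function.Injective Phi := by
      rw [injective_iff_map_eq_zero]
      intro x
      obtain ⟨z, rfl⟩ := Submodule.Quotient.mk_surjective _ x
      intro hx
      rw [Submodule.liftQ_apply] at hx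
      have h1 : Additive.toMul (phi0 R (z : (F ⧸ R) × (F ⧸ R) →₀ ℤ)) = 1 := by
        have := congrArg (fun a => ((Additive.toMul a : ↥ψ.ker) : Q R)) hx
        exact this
      have h0 : phi0 R (z : (F ⧸ R) × (F ⧸ R) →₀ ℤ) = 0 := by
        have := congrArg Additive.ofMul h1
        simpa using this
      rw [Submodule.Quotient.mk_eq_zero]
      exact inj_key R _ (LinearMap.mem_ker.1 z.2) h0
    have hsurj : Function.Surjective Phi := by
      intro y
      set x : ↥ψ.ker := Additive.toMul y with hx
      obtain ⟨r, hr⟩ := QuotientGroup.mk_surjective (x : Q R)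
      have hofr : Abelianization.of (r : F) = 1 := by
        rw [← hψ r, hr]
        exact x.2
      have hrc : (r : F) ∈ _root_.commutator F := (QuotientGroup.eq_one_iff _).1 hofr
      obtain ⟨z, hz2, hz0⟩ := exists_cycle R (r : F) hrc
      have hmkr : (QuotientGroup.mk ((r : F)) : F ⧸ R) = 1 := (QuotientGroup.eq_one_iff _).2 r.2
      have hz2' : barD2 (F ⧸ R) z = 0 := by
        rw [hz2, hmkr, sub_self]
      refine ⟨Submodule.Quotient.mk ⟨z, LinearMap.mem_ker.2 hz2'⟩, ?_⟩
      rw [Submodule.liftQ_apply]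
      have hphi : phi0 R z = Additive.ofMul (QuotientGroup.mk r : Q R) := by
        rw [hz0, l_mem R (r : F) r.2]
      show Additive.ofMul (⟨Additive.toMul (phi0 R z), _⟩ : ↥ψ.ker) = y
      have : (⟨Additive.toMul (phi0 R z), hker _ hz2'⟩ : ↥ψ.ker) = x := by
        apply Subtype.ext
        show Additive.toMul (phi0 R z) = (x : Q R)
        rw [hphi, ← hr]
        rfl
      rw [this]
      rfl
    exact ⟨(AddEquiv.ofBijective Phi ⟨hinj, hsurj⟩).symm⟩
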